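/- Let T be an m×n matrix over a field, let T' be T with its i-th row deleted, and suppose rank(T) > rank(T'). Then for any row vectors g, g' of length m and row vector u of length n, if g·T = u and g'·T = u, then g and g' agree in their i-th entry. -/

import Mathlib

/-- If deleting row `i` drops the rank, then the `i`-th coefficient of a row vector `g`
is uniquely determined by the product `Matrix.vecMul g T`. -/
theorem stmt1 {F : Type*} [Field F] {m n : ℕ} (T : Matrix (Fin (m + 1)) (Fin n) F)
    (i : Fin (m + 1))
    (h : (T.submatrix i.succAbove id).rank < T.rank)
    (g g' : Fin (m + 1) → F) (u : Fin n → F)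
    (hg : Matrix.vecMul g T = u) (hg' : Matrix.vecMul g' T = u) :
    g i = g' i := by
  by_contra hne
  set d : Fin (m + 1) → F := g - g' with hdef
  have hd : Matrix.vecMul d T = 0 := by
    rw [hdef, Matrix.sub_vecMul, hg, hg', sub_self]
  have hdi : d i ≠ 0 := sub_ne_zero.mpr hne
  have hsum : ∑ k, d k • T k = 0 := by
    ext j
    simpa [Matrix.vecMul, dotProduct, mul_comm] using congrFun hd j
  have hsplit : d i • T i + ∑ k : Fin m, d (i.succAbove k) • T (i.succAbove k) = 0 := by
    rw [← Fin.sum_univ_succAbove (fun k => d k • T k) i]; exact hsum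
  have hTi : T i ∈ Submodule.span F (Set.range fun k : Fin m => T (i.succAbove k)) := by
    have hexp : T i = (-(d i)⁻¹) • ∑ k : Fin m, d (i.succAbove k) • T (i.succAbove k) := by
      have := eq_neg_of_add_eq_zero_left hsplit
      rw [neg_smul, ← smul_neg, ← this, smul_smul, inv_mul_cancel₀ hdi, one_smul]
    rw [hexp]
    exact Submodule.smul_mem _ _ (Submodule.sum_mem _ fun k _ =>
      Submodule.smul_mem _ _ (Submodule.subset_span ⟨k, rfl⟩))
  have hspan : Submodule.span F (Set.range T) =
      Submodule.span F (Set.range fun k : Fin m => T (i.succAbove k)) := by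
    apply le_antisymm
    · rw [Submodule.span_le]
      rintro _ ⟨k, rfl⟩
      rcases eq_or_ne k i with rfl | hk
      · exact hTi
      · obtain ⟨j, rfl⟩ := Fin.exists_succAbove_eq hk
        exact Submodule.subset_span ⟨j, rfl⟩
    · apply Submodule.span_mono
      rintro _ ⟨j, rfl⟩
      exact ⟨i.succAbove j, rfl⟩
  have hrange : (Set.range fun k : Fin m => T (i.succAbove k)) =
      Set.range (T.submatrix i.succAbove id) := by
    rfl
  have : T.rank = (T.submatrix i.succAbove id).rank := by
    rw [Matrix.rank_eq_finrank_span_row, Matrix.rank_eq_finrank_span_row]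
    change Module.finrank F (Submodule.span F (Set.range T)) =
      Module.finrank F (Submodule.span F (Set.range (T.submatrix i.succAbove id)))
    rw [← hrange, ← hspan]
  omega
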